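/- Let E be a finite-dimensional real normed space, let h ≥ 1 be a natural number, let V be an h-dimensional linear subspace of E, and let ν be a Radon measure on E with support contained in V such that ν(B̄(y,r)) = r^h for every y ∈ V and every r > 0. Let φ be a Radon measure on E, x ∈ E, λ > 0, and let r_i ↓ 0 be a sequence such that ∫ f d(r_i^{-h} T_{x,r_i}φ) → λ ∫ f dν for every continuous compactly supported f : E → ℝ. Then lim_{i→∞} φ(B̄(x,r_i))/r_i^h = λ. -/

import Mathlib

open MeasureTheory Metric Filter Set
open scoped ENNReal NNReal Topology

variable {E : Type*}

/-- A continuous bump function sandwiched between two closed-ball indicators. -/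
lemma bump_aux [NormedAddCommGroup E] [NormedSpace ℝ E] [FiniteDimensional ℝ E] (a b : ℝ) (ha : 0 < a) (hab : a < b) :
    ∃ f : E → ℝ, Continuous f ∧ HasCompactSupport f ∧
      (∀ y, (closedBall (0:E) a).indicator 1 y ≤ f y) ∧
      (∀ y, f y ≤ (closedBall (0:E) b).indicator 1 y) := by
  haveI : ProperSpace E := FiniteDimensional.proper ℝ E
  refine ⟨fun y => max 0 (min 1 ((b - ‖y‖) / (b - a))), ?_, ?_, ?_, ?_⟩
  · exact continuous_const.max (continuous_const.min
      (((continuous_const.sub continuous_norm).div_const _)))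
  · refine HasCompactSupport.intro (isCompact_closedBall (0:E) b) (fun y hy => ?_)
    have hy' : b < ‖y‖ := by
      simpa [mem_closedBall, dist_eq_norm] using hy
    have : (b - ‖y‖) / (b - a) < 0 :=
      div_neg_of_neg_of_pos (by linarith) (by linarith)
    have : min 1 ((b - ‖y‖) / (b - a)) ≤ 0 := le_trans (min_le_right _ _) this.le
    simpa [max_eq_left this]
  · intro y
    by_cases hy : y ∈ closedBall (0:E) a
    · have hy' : ‖y‖ ≤ a := by simpa [mem_closedBall, dist_eq_norm] using hy
      have h1 : (1:ℝ) ≤ (b - ‖y‖) / (b - a) := by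
        rw [le_div_iff₀ (by linarith)]; linarith
      simp [indicator_of_mem hy, min_eq_left h1]
    · simp only [indicator_of_notMem hy, Pi.zero_apply]
      exact le_max_left _ _
  · intro y
    by_cases hy : y ∈ closedBall (0:E) b
    · simp only [indicator_of_mem hy, Pi.one_apply]
      exact max_le (by norm_num) (min_le_left _ _)
    · have hy' : b < ‖y‖ := by simpa [mem_closedBall, dist_eq_norm] using hy
      have : (b - ‖y‖) / (b - a) < 0 :=
        div_neg_of_neg_of_pos (by linarith) (by linarith)
      have : min 1 ((b - ‖y‖) / (b - a)) ≤ 0 := le_trans (min_le_right _ _) this.le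
      simp [indicator_of_notMem hy, max_eq_left this]

/-- The blow-up measure `T_{x,r} φ`, with `T_{x,r} φ (A) = φ (x + r • A)`. -/
noncomputable def blowup [NormedAddCommGroup E] [NormedSpace ℝ E] [MeasurableSpace E]
    (φ : Measure E) (x : E) (r : ℝ) : Measure E :=
  Measure.map (fun y => r⁻¹ • (y - x)) φ

theorem stmt3 [NormedAddCommGroup E] [NormedSpace ℝ E] [FiniteDimensional ℝ E]
    [MeasurableSpace E] [BorelSpace E]
    (h : ℕ) (h1 : 1 ≤ h) (V : Submodule ℝ E) (hV : Module.finrank ℝ V = h)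
    (ν : Measure E) [IsLocallyFiniteMeasure ν]
    (hsupp : ν ((V : Set E)ᶜ) = 0)
    (hν : ∀ y ∈ (V : Set E), ∀ r : ℝ, 0 < r → ν (closedBall y r) = ENNReal.ofReal (r ^ h))
    (φ : Measure E) [IsLocallyFiniteMeasure φ] (x : E) (lam : ℝ) (hlam : 0 < lam)
    (r : ℕ → ℝ) (hrpos : ∀ i, 0 < r i) (hr0 : Tendsto r atTop (𝓝 0))
    (hconv : ∀ f : E → ℝ, Continuous f → HasCompactSupport f →
      Tendsto (fun i => ∫ y, f y ∂((ENNReal.ofReal ((r i) ^ h))⁻¹ • blowup φ x (r i))) atTop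
        (𝓝 (lam * ∫ y, f y ∂ν))) :
    Tendsto (fun i => φ (closedBall x (r i)) / ENNReal.ofReal ((r i) ^ h)) atTop
      (𝓝 (ENNReal.ofReal lam)) := by
  haveI : ProperSpace E := FiniteDimensional.proper ℝ E
  haveI : IsFiniteMeasureOnCompacts ν := isFiniteMeasureOnCompacts_of_isLocallyFiniteMeasure
  set μ : ℕ → Measure E := fun i => (ENNReal.ofReal ((r i) ^ h))⁻¹ • blowup φ x (r i) with hμdef
  have hrh : ∀ i, (0:ℝ) < (r i) ^ h := fun i => pow_pos (hrpos i) h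
  have hcinv : ∀ i, (ENNReal.ofReal ((r i) ^ h))⁻¹ ≠ ⊤ := fun i =>
    ENNReal.inv_ne_top.2 (ENNReal.ofReal_pos.2 (hrh i)).ne'
  have hmeas : ∀ i, Measurable (fun y : E => (r i)⁻¹ • (y - x)) := fun i =>
    ((continuous_id.sub continuous_const).const_smul ((r i)⁻¹)).measurable
  -- μ i of closed balls equals rescaled φ of closed balls
  have hμball : ∀ i (s : ℝ), 0 < s → μ i (closedBall (0:E) s)
      = φ (closedBall x (s * r i)) / ENNReal.ofReal ((r i) ^ h) := by
    intro i s hs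
    have hpre : (fun y : E => (r i)⁻¹ • (y - x)) ⁻¹' closedBall (0:E) s
        = closedBall x (s * r i) := by
      ext y
      simp only [mem_preimage, mem_closedBall, dist_eq_norm, sub_zero, norm_smul,
        norm_inv, Real.norm_eq_abs, abs_of_pos (hrpos i)]
      rw [inv_mul_le_iff₀ (hrpos i), mul_comm (r i) s]
    have : blowup φ x (r i) (closedBall (0:E) s) = φ (closedBall x (s * r i)) := by
      rw [blowup, Measure.map_apply (hmeas i) measurableSet_closedBall, hpre]
    simp only [hμdef, Measure.smul_apply, smul_eq_mul, this]
    rw [ENNReal.div_eq_inv_mul]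
  -- μ i is finite on compacts
  have hfc : ∀ i (K : Set E), IsCompact K → μ i K < ⊤ := by
    intro i K hK
    obtain ⟨R, hR⟩ := hK.isBounded.subset_closedBall 0
    have hR1 : K ⊆ closedBall (0:E) (max R 1) :=
      hR.trans (closedBall_subset_closedBall (le_max_left _ _))
    calc μ i K ≤ μ i (closedBall (0:E) (max R 1)) := measure_mono hR1
      _ = φ (closedBall x (max R 1 * r i)) / ENNReal.ofReal ((r i) ^ h) :=
          hμball i _ (lt_of_lt_of_le one_pos (le_max_right _ _))
      _ < ⊤ := ENNReal.div_lt_top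
          ((isCompact_closedBall _ _).measure_lt_top).ne
          (ENNReal.ofReal_pos.2 (hrh i)).ne'
  have hμball_ne_top : ∀ i, μ i (closedBall (0:E) 1) ≠ ⊤ := by
    intro i
    haveI : IsFiniteMeasureOnCompacts (μ i) := ⟨fun _ hK => hfc i _ hK⟩
    exact ((isCompact_closedBall (0:E) 1).measure_lt_top).ne
  -- ν of closed balls around 0
  have hν0 : ∀ s : ℝ, 0 < s → ν (closedBall (0:E) s) = ENNReal.ofReal (s ^ h) :=
    fun s hs => hν 0 (V.zero_mem) s hs
  -- the real-valued quantity
  set A : ℕ → ℝ := fun i => (μ i (closedBall (0:E) 1)).toReal with hAdef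
  -- integral comparison helpers
  have hind_int : ∀ i (s : ℝ) (hs : 0 < s) (hss : s ≤ 1),
      Integrable ((closedBall (0:E) s).indicator (1 : E → ℝ)) (μ i) := by
    intro i s hs hss
    haveI : IsFiniteMeasureOnCompacts (μ i) := ⟨fun _ hK => hfc i _ hK⟩
    rw [integrable_indicator_iff measurableSet_closedBall]
    refine integrableOn_const (ne_of_lt ?_)
    exact lt_of_le_of_lt (measure_mono (closedBall_subset_closedBall hss))
      ((isCompact_closedBall (0:E) 1).measure_lt_top)
  have hind_int_ν : ∀ s : ℝ, 0 < s →
      Integrable ((closedBall (0:E) s).indicator (1 : E → ℝ)) ν := by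
    intro s hs
    rw [integrable_indicator_iff measurableSet_closedBall]
    exact integrableOn_const
      (ne_of_lt (IsCompact.measure_lt_top (μ := ν) (isCompact_closedBall (0:E) s)))
  -- main convergence of A to lam
  have hA : Tendsto A atTop (𝓝 lam) := by
    rw [tendsto_order]
    constructor
    · -- lower bound: for l < lam, eventually l < A i
      intro l hl
      -- choose s ∈ (0,1) with l < lam * s^h
      obtain ⟨s, hs1, hs0, hsl⟩ : ∃ s : ℝ, s < 1 ∧ 0 < s ∧ l < lam * s ^ h := by
        have hcont : ContinuousAt (fun c : ℝ => lam * c ^ h) 1 :=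
          (continuous_const.mul (continuous_pow h)).continuousAt
        have h1 : ∀ᶠ c in 𝓝 (1:ℝ), l < lam * c ^ h := by
          apply hcont.eventually_const_lt
          simpa using hl
        have h2 : ∀ᶠ c in 𝓝 (1:ℝ), (0:ℝ) < c :=
          Filter.Tendsto.eventually_const_lt (by norm_num) Filter.tendsto_id
        haveI : (𝓝[<] (1:ℝ)).NeBot := nhdsLT_neBot (a := 1)
        have h3 : ∀ᶠ c in 𝓝[<] (1:ℝ), l < lam * c ^ h ∧ (0:ℝ) < c :=
          (h1.and h2).filter_mono nhdsWithin_le_nhds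
        obtain ⟨c, ⟨hc1, hc2⟩, hc3⟩ := (h3.and eventually_mem_nhdsWithin).exists
        exact ⟨c, hc3, hc2, hc1⟩
      obtain ⟨f, hfc', hfs, hf_lo, hf_hi⟩ := bump_aux (E := E) s 1 hs0 hs1
      have hfν : s ^ h ≤ ∫ y, f y ∂ν := by
        have := integral_mono (hind_int_ν s hs0)
          (Continuous.integrable_of_hasCompactSupport (μ := ν) hfc' hfs) hf_lo
        rwa [integral_indicator_one measurableSet_closedBall, measureReal_def, hν0 s hs0,
          ENNReal.toReal_ofReal (pow_pos hs0 h).le] at this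
      have hlim : l < lam * ∫ y, f y ∂ν :=
        lt_of_lt_of_le hsl (by nlinarith)
      have hev : ∀ᶠ i in atTop, l < ∫ y, f y ∂(μ i) :=
        (hconv f hfc' hfs).eventually_const_lt hlim
      filter_upwards [hev] with i hi
      haveI : IsFiniteMeasureOnCompacts (μ i) := ⟨fun _ hK => hfc i _ hK⟩
      have : ∫ y, f y ∂(μ i) ≤ A i := by
        have := integral_mono (hfc'.integrable_of_hasCompactSupport hfs)
          (hind_int i 1 one_pos le_rfl) hf_hi
        rwa [integral_indicator_one measurableSet_closedBall] at this
      linarith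
    · -- upper bound: for lam < u, eventually A i < u
      intro u hu
      obtain ⟨t, ht1, htu⟩ : ∃ t : ℝ, 1 < t ∧ lam * t ^ h < u := by
        have hcont : ContinuousAt (fun c : ℝ => lam * c ^ h) 1 :=
          (continuous_const.mul (continuous_pow h)).continuousAt
        have h1 : ∀ᶠ c in 𝓝 (1:ℝ), lam * c ^ h < u := by
          apply hcont.eventually_lt_const
          simpa using hu
        haveI : (𝓝[>] (1:ℝ)).NeBot := nhdsGT_neBot (a := 1)
        have h3 : ∀ᶠ c in 𝓝[>] (1:ℝ), lam * c ^ h < u :=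
          h1.filter_mono nhdsWithin_le_nhds
        obtain ⟨c, hc1, hc2⟩ := (h3.and eventually_mem_nhdsWithin).exists
        exact ⟨c, hc2, hc1⟩
      obtain ⟨f, hfc', hfs, hf_lo, hf_hi⟩ := bump_aux (E := E) 1 t one_pos ht1
      have hfν : ∫ y, f y ∂ν ≤ t ^ h := by
        have := integral_mono (hfc'.integrable_of_hasCompactSupport hfs)
          (hind_int_ν t (by linarith)) hf_hi
        rwa [integral_indicator_one measurableSet_closedBall, measureReal_def, hν0 t (by linarith),
          ENNReal.toReal_ofReal (pow_pos (by linarith : (0:ℝ) < t) h).le] at this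
      have hlim : lam * ∫ y, f y ∂ν < u :=
        lt_of_le_of_lt (by nlinarith) htu
      have hev : ∀ᶠ i in atTop, ∫ y, f y ∂(μ i) < u :=
        (hconv f hfc' hfs).eventually_lt_const hlim
      filter_upwards [hev] with i hi
      haveI : IsFiniteMeasureOnCompacts (μ i) := ⟨fun _ hK => hfc i _ hK⟩
      have : A i ≤ ∫ y, f y ∂(μ i) := by
        have := integral_mono (hind_int i 1 one_pos le_rfl)
          (hfc'.integrable_of_hasCompactSupport hfs) hf_lo
        rwa [integral_indicator_one measurableSet_closedBall] at this
      linarith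
  -- conclude
  have key : ∀ i, φ (closedBall x (r i)) / ENNReal.ofReal ((r i) ^ h)
      = ENNReal.ofReal (A i) := by
    intro i
    have hb := hμball i 1 one_pos
    rw [one_mul] at hb
    rw [← hb, hAdef, ENNReal.ofReal_toReal (hμball_ne_top i)]
  simp only [key]
  exact ENNReal.tendsto_ofReal hA
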